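/- Let E be a finite-dimensional real normed vector space, Φ : E → E a C² diffeomorphism whose Jacobian determinant is identically 1 (det (fderiv ℝ Φ x) = 1 for all x), and X : E → E a differentiable vector field. Define the pushforward vector field Φ_*X : E → E by (Φ_*X)(y) := fderiv ℝ Φ (Φ⁻¹ y) (X (Φ⁻¹ y)). Then for every x ∈ E, trace(fderiv ℝ (Φ_*X) (Φ x)) = trace(fderiv ℝ X x); that is, the divergence with respect to the standard volume satisfies div(Φ_*X) ∘ Φ = div X for volume-preserving diffeomorphisms. -/

import Mathlib

open Function

section Aux

variable {E : Type*} [NormedAddCommGroup E] [NormedSpace ℝ E] [FiniteDimensional ℝ E]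

/-- The determinant, as a function on continuous linear endomorphisms of a
finite-dimensional space, is differentiable. -/
lemma detCLM_differentiable :
    Differentiable ℝ (fun g : E →L[ℝ] E => LinearMap.det (g : E →ₗ[ℝ] E)) := by
  classical
  set b := Module.finBasis ℝ E with hb
  have hfun : (fun g : E →L[ℝ] E => LinearMap.det (g : E →ₗ[ℝ] E)) =
      fun g : E →L[ℝ] E => ∑ σ : Equiv.Perm (Fin (Module.finrank ℝ E)),
        (Equiv.Perm.sign σ : ℤ) *
          ∏ i, (LinearMap.toMatrix b b (g : E →ₗ[ℝ] E)) (σ i) i := by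
    funext g
    rw [← LinearMap.det_toMatrix b, Matrix.det_apply']

  rw [hfun]
  apply Differentiable.fun_sum
  intro σ _
  apply Differentiable.const_mul
  have hentry : ∀ (i j : Fin (Module.finrank ℝ E)),
      Differentiable ℝ (fun g : E →L[ℝ] E =>
        (LinearMap.toMatrix b b (g : E →ₗ[ℝ] E)) i j) := by
    intro i j
    let f : (E →L[ℝ] E) →ₗ[ℝ] ℝ :=
      { toFun := fun g => (LinearMap.toMatrix b b (g : E →ₗ[ℝ] E)) i j
        map_add' := by intro g₁ g₂; simp
        map_smul' := by intro c g; simp }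
    have hcont : Differentiable ℝ f := (LinearMap.toContinuousLinearMap f).differentiable
    exact hcont
  have hprod : ∀ s : Finset (Fin (Module.finrank ℝ E)),
      Differentiable ℝ (fun g : E →L[ℝ] E =>
        ∏ i ∈ s, (LinearMap.toMatrix b b (g : E →ₗ[ℝ] E)) (σ i) i) := by
    intro s
    induction s using Finset.induction with
    | empty => simp only [Finset.prod_empty]; exact differentiable_const (1 : ℝ)
    | @insert a s h ih =>
      simp only [Finset.prod_insert h]
      exact (hentry _ _).mul ih
  exact hprod Finset.univ

/-- Derivative of the determinant along an affine line through an invertible map with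
determinant one: the derivative at `0` of `t ↦ det (A + t • H)` is `trace (C ∘ H)`,
where `C` is the inverse of `A`. -/
lemma hasDerivAt_detCLM_line (A C H : E →L[ℝ] E)
    (hAC : A.comp C = ContinuousLinearMap.id ℝ E)
    (hdetA : LinearMap.det (A : E →ₗ[ℝ] E) = 1) :
    HasDerivAt (fun t : ℝ => LinearMap.det ((A + t • H : E →L[ℝ] E) : E →ₗ[ℝ] E))
      (LinearMap.trace ℝ E ((C.comp H : E →L[ℝ] E) : E →ₗ[ℝ] E)) 0 := by
  classical
  set b := Module.finBasis ℝ E with hb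
  set K := C.comp H with hK
  set KM := LinearMap.toMatrix b b (K : E →ₗ[ℝ] E) with hKM
  set q := ((Matrix.det (1 + (Polynomial.X : Polynomial ℝ) • KM.map Polynomial.C)).divX).divX
    with hq
  have hACv : ∀ v, A (C v) = v := by
    intro v
    have := DFunLike.congr_fun hAC v
    simpa using this
  have key : ∀ t : ℝ, LinearMap.det ((A + t • H : E →L[ℝ] E) : E →ₗ[ℝ] E) =
      1 + Matrix.trace KM * t + Polynomial.eval t q * t ^ 2 := by
    intro t
    have h1 : (A + t • H : E →L[ℝ] E) =
        A.comp (ContinuousLinearMap.id ℝ E + t • K) := by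
      ext v
      simp [K, hACv, ContinuousLinearMap.comp_apply, map_add, map_smul]
    rw [h1, ContinuousLinearMap.toLinearMap_comp, LinearMap.det_comp, hdetA, one_mul]
    have h2 : LinearMap.det ((ContinuousLinearMap.id ℝ E + t • K : E →L[ℝ] E) : E →ₗ[ℝ] E) =
        Matrix.det (1 + t • KM) := by
      rw [← LinearMap.det_toMatrix b]
      congr 1
      have : ((ContinuousLinearMap.id ℝ E + t • K : E →L[ℝ] E) : E →ₗ[ℝ] E) =
          LinearMap.id + t • (K : E →ₗ[ℝ] E) := by
        ext v; simp
      rw [this, map_add, map_smul, LinearMap.toMatrix_id, hKM]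
    rw [h2, Matrix.det_one_add_smul t KM, hq]
  have h3 : HasDerivAt (fun t : ℝ => 1 + Matrix.trace KM * t + Polynomial.eval t q * t ^ 2)
      (Matrix.trace KM) 0 := by
    have hq2 : HasDerivAt (fun t : ℝ => Polynomial.eval t q * t ^ 2) 0 0 := by
      have := (q.hasDerivAt (0 : ℝ)).mul (hasDerivAt_pow 2 (0 : ℝ))
      simpa [Pi.mul_def] using this
    have hlin : HasDerivAt (fun t : ℝ => 1 + Matrix.trace KM * t) (Matrix.trace KM) 0 := by
      simpa using ((hasDerivAt_id (0 : ℝ)).const_mul (Matrix.trace KM)).const_add 1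
    simpa [Pi.add_def] using hlin.add hq2
  have htr : Matrix.trace KM = LinearMap.trace ℝ E ((K : E →L[ℝ] E) : E →ₗ[ℝ] E) := by
    rw [hKM, LinearMap.trace_eq_matrix_trace ℝ b]
  rw [← htr]
  have hfe : (fun t : ℝ => LinearMap.det ((A + t • H : E →L[ℝ] E) : E →ₗ[ℝ] E)) =
      fun t : ℝ => 1 + Matrix.trace KM * t + Polynomial.eval t q * t ^ 2 := funext key
  rw [hfe]
  exact h3

/-- The directional derivative of the determinant at an invertible `A` with `det A = 1`
in the direction `H` is `trace (C ∘ H)`. -/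
lemma fderiv_detCLM_apply (A C H : E →L[ℝ] E)
    (hAC : A.comp C = ContinuousLinearMap.id ℝ E)
    (hdetA : LinearMap.det (A : E →ₗ[ℝ] E) = 1) :
    (fderiv ℝ (fun g : E →L[ℝ] E => LinearMap.det (g : E →ₗ[ℝ] E)) A) H =
      LinearMap.trace ℝ E ((C.comp H : E →L[ℝ] E) : E →ₗ[ℝ] E) := by
  have hdiff := (detCLM_differentiable (E := E) A).hasFDerivAt
  have hline : HasDerivAt (fun t : ℝ => A + t • H) H 0 := by
    simpa using ((hasDerivAt_id (0 : ℝ)).smul_const H).const_add A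
  have hdiff2 : HasFDerivAt (fun g : E →L[ℝ] E => LinearMap.det (g : E →ₗ[ℝ] E))
      (fderiv ℝ (fun g : E →L[ℝ] E => LinearMap.det (g : E →ₗ[ℝ] E)) A)
      (A + (0 : ℝ) • H) := by simpa using hdiff
  have hcomp := hdiff2.comp_hasDerivAt 0 hline
  exact (hasDerivAt_detCLM_line A C H hAC hdetA).unique hcomp |>.symm
end Aux

/-- For a volume-preserving `C²` diffeomorphism `Φ` (Jacobian determinant identically `1`)
and a differentiable vector field `X`, the divergence (trace of the Fréchet derivative) of
the pushforward vector field satisfies `div(Φ_*X) ∘ Φ = div X`. -/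
theorem divergence_pushforward_volume_preserving
    {E : Type*} [NormedAddCommGroup E] [NormedSpace ℝ E] [FiniteDimensional ℝ E]
    (Φ Ψ : E → E)
    (hΦ : ContDiff ℝ 2 Φ) (hΨ : ContDiff ℝ 2 Ψ)
    (hΨΦ : LeftInverse Ψ Φ) (hΦΨ : RightInverse Ψ Φ)
    (hdet : ∀ x, LinearMap.det (fderiv ℝ Φ x).toLinearMap = 1)
    (X : E → E) (hX : Differentiable ℝ X) :
    ∀ x, LinearMap.trace ℝ E
        (fderiv ℝ (fun y => fderiv ℝ Φ (Ψ y) (X (Ψ y))) (Φ x)).toLinearMap =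
      LinearMap.trace ℝ E (fderiv ℝ X x).toLinearMap := by
  intro x
  have hΦd : Differentiable ℝ Φ := hΦ.differentiable two_ne_zero
  have hΨd : Differentiable ℝ Ψ := hΨ.differentiable two_ne_zero
  set A := fderiv ℝ Φ x with hA
  set C := fderiv ℝ Ψ (Φ x) with hC
  have hAx : HasFDerivAt Φ A x := (hΦd x).hasFDerivAt
  have hCx : HasFDerivAt Ψ C (Φ x) := (hΨd (Φ x)).hasFDerivAt
  -- derivatives of Φ at Ψ (Φ x) = x
  have hAΨ : HasFDerivAt Φ A (Ψ (Φ x)) := by rw [hΨΦ x]; exact hAx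
  -- C ∘ A = id
  have hCA : C.comp A = ContinuousLinearMap.id ℝ E := by
    have h1 : HasFDerivAt (Ψ ∘ Φ) (C.comp A) x := hCx.comp x hAx
    have h2 : HasFDerivAt (Ψ ∘ Φ) (ContinuousLinearMap.id ℝ E) x := by
      have : (Ψ ∘ Φ) = id := funext hΨΦ
      rw [this]; exact hasFDerivAt_id x
    exact h1.unique h2
  -- A ∘ C = id
  have hAC : A.comp C = ContinuousLinearMap.id ℝ E := by
    have h1 : HasFDerivAt (Φ ∘ Ψ) (A.comp C) (Φ x) := hAΨ.comp (Φ x) hCx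
    have h2 : HasFDerivAt (Φ ∘ Ψ) (ContinuousLinearMap.id ℝ E) (Φ x) := by
      have : (Φ ∘ Ψ) = id := funext hΦΨ
      rw [this]; exact hasFDerivAt_id (Φ x)
    exact h1.unique h2
  -- second derivative of Φ
  have hB1 : ContDiff ℝ 1 (fderiv ℝ Φ) := hΦ.fderiv_right (by norm_num)
  have hBd : Differentiable ℝ (fderiv ℝ Φ) := hB1.differentiable one_ne_zero
  set D := fderiv ℝ (fderiv ℝ Φ) x with hD
  have hDx : HasFDerivAt (fderiv ℝ Φ) D x := (hBd x).hasFDerivAt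
  have hDΨ : HasFDerivAt (fderiv ℝ Φ) D (Ψ (Φ x)) := by rw [hΨΦ x]; exact hDx
  -- symmetry of the second derivative
  have hsymm : ∀ v w, D v w = D w v :=
    second_derivative_symmetric (fun y => (hΦd y).hasFDerivAt) hDx
  -- key vanishing: trace (C ∘ D w) = 0 for every w
  have hkey : ∀ w, LinearMap.trace ℝ E
      (((C.comp (D w)) : E →L[ℝ] E) : E →ₗ[ℝ] E) = 0 := by
    intro w
    -- the curve t ↦ fderiv Φ (x + t w) has derivative D w at 0
    have hline : HasDerivAt (fun t : ℝ => x + t • w) w 0 := by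
      simpa using ((hasDerivAt_id (0 : ℝ)).smul_const w).const_add x
    have hDx0 : HasFDerivAt (fderiv ℝ Φ) D (x + (0 : ℝ) • w) := by
      simpa using hDx
    have hcurve : HasDerivAt (fun t : ℝ => fderiv ℝ Φ (x + t • w)) (D w) 0 := by
      simpa [Function.comp_def] using hDx0.comp_hasDerivAt 0 hline
    -- composing with the determinant gives a constant function
    have hdiff := (detCLM_differentiable (E := E) A).hasFDerivAt
    have hdiff' : HasFDerivAt (fun g : E →L[ℝ] E => LinearMap.det (g : E →ₗ[ℝ] E))
        (fderiv ℝ (fun g : E →L[ℝ] E => LinearMap.det (g : E →ₗ[ℝ] E)) A)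
        (fderiv ℝ Φ (x + (0 : ℝ) • w)) := by
      simpa using hdiff
    have hcomp : HasDerivAt
        (fun t : ℝ => LinearMap.det ((fderiv ℝ Φ (x + t • w) : E →L[ℝ] E) : E →ₗ[ℝ] E))
        ((fderiv ℝ (fun g : E →L[ℝ] E => LinearMap.det (g : E →ₗ[ℝ] E)) A) (D w)) 0 :=
      by have h := hdiff'.comp_hasDerivAt 0 hcurve; exact h
    have hconst : HasDerivAt
        (fun t : ℝ => LinearMap.det ((fderiv ℝ Φ (x + t • w) : E →L[ℝ] E) : E →ₗ[ℝ] E))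
        0 0 := by
      have : (fun t : ℝ => LinearMap.det ((fderiv ℝ Φ (x + t • w) : E →L[ℝ] E) : E →ₗ[ℝ] E)) =
          fun _ : ℝ => (1 : ℝ) := by
        funext t; exact hdet (x + t • w)
      rw [this]; exact hasDerivAt_const 0 1
    have h0 : (fderiv ℝ (fun g : E →L[ℝ] E => LinearMap.det (g : E →ₗ[ℝ] E)) A) (D w) = 0 :=
      hcomp.unique hconst
    rw [← fderiv_detCLM_apply A C (D w) hAC (hdet x), h0]
  -- derivative of the pushforward field at Φ x
  set X' := fderiv ℝ X x with hX'
  have hXΨ : HasFDerivAt X X' (Ψ (Φ x)) := by rw [hΨΦ x]; exact (hX x).hasFDerivAt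
  have hc : HasFDerivAt (fun y => fderiv ℝ Φ (Ψ y)) (D.comp C) (Φ x) :=
    hDΨ.comp (Φ x) hCx
  have hu : HasFDerivAt (fun y => X (Ψ y)) (X'.comp C) (Φ x) := hXΨ.comp (Φ x) hCx
  have hY : HasFDerivAt (fun y => fderiv ℝ Φ (Ψ y) (X (Ψ y)))
      ((fderiv ℝ Φ (Ψ (Φ x))).comp (X'.comp C) + (D.comp C).flip (X (Ψ (Φ x)))) (Φ x) :=
    hc.clm_apply hu
  have hY' : HasFDerivAt (fun y => fderiv ℝ Φ (Ψ y) (X (Ψ y)))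
      (A.comp (X'.comp C) + (D.comp C).flip (X x)) (Φ x) := by
    rwa [hΨΦ x] at hY
  rw [hY'.fderiv]
  -- compute the trace
  have hflip : (((D.comp C).flip (X x) : E →L[ℝ] E) : E →ₗ[ℝ] E) =
      (((D (X x)).comp C : E →L[ℝ] E) : E →ₗ[ℝ] E) := by
    ext v
    simp [ContinuousLinearMap.flip_apply, ContinuousLinearMap.comp_apply, hsymm (C v) (X x)]
  have h1 : LinearMap.trace ℝ E (((A.comp (X'.comp C)) : E →L[ℝ] E) : E →ₗ[ℝ] E) =
      LinearMap.trace ℝ E (X' : E →ₗ[ℝ] E) := by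
    have : (((A.comp (X'.comp C)) : E →L[ℝ] E) : E →ₗ[ℝ] E) =
        ((A : E →ₗ[ℝ] E) * ((X'.comp C : E →L[ℝ] E) : E →ₗ[ℝ] E)) := by
      ext v; simp [ContinuousLinearMap.comp_apply, Module.End.mul_apply]
    rw [this, LinearMap.trace_mul_comm]
    have : (((X'.comp C : E →L[ℝ] E) : E →ₗ[ℝ] E) * (A : E →ₗ[ℝ] E)) =
        (((X'.comp (C.comp A)) : E →L[ℝ] E) : E →ₗ[ℝ] E) := by
      ext v; simp [ContinuousLinearMap.comp_apply, Module.End.mul_apply]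
    rw [this, hCA]
    congr 1
  have h2 : LinearMap.trace ℝ E ((((D.comp C).flip (X x)) : E →L[ℝ] E) : E →ₗ[ℝ] E) = 0 := by
    rw [hflip]
    have : ((((D (X x)).comp C) : E →L[ℝ] E) : E →ₗ[ℝ] E) =
        (((D (X x)) : E →ₗ[ℝ] E) * ((C : E →L[ℝ] E) : E →ₗ[ℝ] E)) := by
      ext v; simp [ContinuousLinearMap.comp_apply, Module.End.mul_apply]
    rw [this, LinearMap.trace_mul_comm]
    have : (((C : E →L[ℝ] E) : E →ₗ[ℝ] E) * ((D (X x)) : E →ₗ[ℝ] E)) =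
        (((C.comp (D (X x))) : E →L[ℝ] E) : E →ₗ[ℝ] E) := by
      ext v; simp [ContinuousLinearMap.comp_apply, Module.End.mul_apply]
    rw [this]
    exact hkey (X x)
  rw [ContinuousLinearMap.coe_add, map_add, h1, h2, add_zero]
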